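/- arXiv:math/0504030 — 3 statements merged into one kernel-verified Lean document; each statement's English description precedes it below -/
import Mathlib

section
/- Fix integers N ≥ 1 and M ≥ 0 and set L = 2^{Nd}. For each k with N ≤ k ≤ L define h_k : ℝ^d → {0,1} as the indicator of the union over j = (j_1,…,j_d) ∈ {0,…,2^{k-N}-1}^d of the cubes ∏_{i=1}^d [j_i 2^{-k+N}, j_i 2^{-k+N} + 2^{-k-M}]. Then for indices N ≤ k ≤ k' ≤ L: the Lebesgue measure of the support of h_k·h_{k'} equals 2^{-(N+M)d} · max{2^{(k-k')d}, 2^{-(N+M)d}} if k' ≤ k+N+M, and equals 2^{-(N+M)d} · 2^{-(N+M)d} if k' ≥ k+N+M. -/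
open MeasureTheory

/-- The support of `h_k`: union over `j ∈ {0,…,2^{k-N}-1}^d` of the cubes
`∏_i [j_i 2^{-k+N}, j_i 2^{-k+N} + 2^{-k-M}]`. -/
def cubeUnion (d N M k : ℕ) : Set (EuclideanSpace ℝ (Fin d)) :=
  ⋃ (j : Fin d → ℕ) (_ : ∀ i, j i < 2 ^ (k - N)),
    WithLp.ofLp ⁻¹' Set.univ.pi fun i =>
      Set.Icc ((j i : ℝ) * (2 : ℝ) ^ ((N : ℤ) - (k : ℤ)))
        ((j i : ℝ) * (2 : ℝ) ^ ((N : ℤ) - (k : ℤ)) + (2 : ℝ) ^ (-(k : ℤ) - (M : ℤ)))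

open Set

/-- one-dimensional slice of the cube union -/
def Uset (N M k : ℕ) : Set ℝ :=
  ⋃ j ∈ Finset.range (2 ^ (k - N)),
    Set.Icc ((j : ℝ) * (2 : ℝ) ^ ((N : ℤ) - (k : ℤ)))
      ((j : ℝ) * (2 : ℝ) ^ ((N : ℤ) - (k : ℤ)) + (2 : ℝ) ^ (-(k : ℤ) - (M : ℤ)))

lemma measurable_Uset (N M k : ℕ) : MeasurableSet (Uset N M k) :=
  Finset.measurableSet_biUnion _ fun _ _ => measurableSet_Icc

lemma cubeUnion_eq_pi (d N M k : ℕ) :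
    cubeUnion d N M k = WithLp.ofLp ⁻¹' Set.univ.pi fun _ : Fin d => Uset N M k := by
  ext x
  constructor
  · rintro hx i -
    obtain ⟨j, hj, hxj⟩ := Set.mem_iUnion₂.mp hx
    exact Set.mem_iUnion₂.mpr ⟨j i, Finset.mem_range.mpr (hj i), hxj i (Set.mem_univ i)⟩
  · intro h
    have h' : ∀ i : Fin d, ∃ m : ℕ, m < 2 ^ (k - N) ∧ x i ∈
        Set.Icc ((m : ℝ) * (2 : ℝ) ^ ((N : ℤ) - (k : ℤ)))
          ((m : ℝ) * (2 : ℝ) ^ ((N : ℤ) - (k : ℤ)) + (2 : ℝ) ^ (-(k : ℤ) - (M : ℤ))) := by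
      intro i
      obtain ⟨m, hm, hxm⟩ := Set.mem_iUnion₂.mp (h i (Set.mem_univ i))
      exact ⟨m, Finset.mem_range.mp hm, hxm⟩
    choose j hj hx using h'
    exact Set.mem_iUnion₂.mpr ⟨j, hj, fun i _ => hx i⟩

lemma disjoint_Icc_of_lt {a b c d : ℝ} (h : b < c) : Disjoint (Set.Icc a b) (Set.Icc c d) := by
  rw [Set.disjoint_iff_inter_eq_empty, Set.Icc_inter_Icc]
  refine Set.Icc_eq_empty (not_le.mpr ?_)
  calc b ⊓ d ≤ b := inf_le_left
    _ < c := h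
    _ ≤ a ⊔ c := le_sup_right

lemma pairwiseDisjoint_grid {s ℓ : ℝ} (hℓ : 0 ≤ ℓ) (hls : ℓ < s) :
    Pairwise (Function.onFun Disjoint fun j : ℕ => Set.Icc ((j:ℝ)*s) ((j:ℝ)*s + ℓ)) := by
  have hs : 0 < s := lt_of_le_of_lt hℓ hls
  intro i j hij
  rcases lt_or_gt_of_ne hij with h | h
  · refine disjoint_Icc_of_lt ?_
    have : (i:ℝ) + 1 ≤ (j:ℝ) := by exact_mod_cast h
    nlinarith
  · refine (disjoint_Icc_of_lt ?_).symm
    have : (j:ℝ) + 1 ≤ (i:ℝ) := by exact_mod_cast h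
    nlinarith

lemma volume_Uset_inter (N M k k' T : ℕ) (hN : 1 ≤ N) (hNk : N ≤ k) (hkk' : k ≤ k')
    (h1 : (2:ℝ) ^ (-(k:ℤ)-(M:ℤ)) ≤ (T:ℝ) * 2 ^ ((N:ℤ)-(k':ℤ)))
    (h2 : (T:ℝ) * 2 ^ ((N:ℤ)-(k':ℤ)) + 2 ^ (-(k':ℤ)-(M:ℤ))
        ≤ 2 ^ (-(k:ℤ)-(M:ℤ)) + 2 ^ ((N:ℤ)-(k':ℤ)))
    (h3 : T ≤ 2 ^ (k' - k)) :
    volume (Uset N M k ∩ Uset N M k') =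
      ((2 ^ (k - N) * T : ℕ) : ENNReal) * ENNReal.ofReal ((2:ℝ) ^ (-(k':ℤ)-(M:ℤ))) := by
  set s : ℝ := 2 ^ ((N:ℤ)-(k:ℤ)) with hs_def
  set s' : ℝ := 2 ^ ((N:ℤ)-(k':ℤ)) with hs'_def
  set ℓ : ℝ := 2 ^ (-(k:ℤ)-(M:ℤ)) with hl_def
  set ℓ' : ℝ := 2 ^ (-(k':ℤ)-(M:ℤ)) with hl'_def
  set B : ℕ := 2 ^ (k' - k) with hB_def
  have h2R : (1:ℝ) < 2 := one_lt_two
  have hs'pos : 0 < s' := by positivity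
  have hℓpos : 0 < ℓ := by positivity
  have hℓ'pos : 0 < ℓ' := by positivity
  have hℓ's' : ℓ' < s' := zpow_lt_zpow_right₀ h2R (by omega)
  have hℓs : ℓ < s := zpow_lt_zpow_right₀ h2R (by omega)
  have hℓ'ℓ : ℓ' ≤ ℓ := zpow_le_zpow_right₀ h2R.le (by omega)
  have hBs : (B:ℝ) * s' = s := by
    rw [hB_def, hs_def, hs'_def]
    push_cast
    rw [← zpow_natCast (2:ℝ) (k'-k), ← zpow_add₀ (by norm_num : (2:ℝ) ≠ 0)]
    congr 1
    omega
  have key : ∀ j ∈ Finset.range (2 ^ (k - N)),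
      volume (Set.Icc ((j:ℝ) * s) ((j:ℝ) * s + ℓ) ∩ Uset N M k')
        = T • ENNReal.ofReal ℓ' := by
    intro j hj
    have hj1 : j + 1 ≤ 2 ^ (k - N) := Finset.mem_range.mp hj
    rw [Uset, Set.inter_iUnion₂]
    rw [measure_biUnion_finset
      (Set.PairwiseDisjoint.mono ((pairwiseDisjoint_grid hℓ'pos.le hℓ's').set_pairwise _)
        (fun j' => Set.inter_subset_right))
      (fun j' _ => (measurableSet_Icc.inter measurableSet_Icc))]
    simp only [Set.Icc_inter_Icc, Real.volume_Icc]
    rw [← Finset.sum_subset (s₁ := Finset.Ico (j * B) (j * B + T))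
      (by
        intro x hx
        rw [Finset.mem_Ico] at hx
        rw [Finset.mem_range]
        have hBB : 2 ^ (k - N) * B = 2 ^ (k' - N) := by
          rw [hB_def, ← pow_add]; congr 1; omega
        calc x < j * B + T := hx.2
          _ ≤ j * B + B := by omega
          _ = (j + 1) * B := by ring
          _ ≤ 2 ^ (k - N) * B := Nat.mul_le_mul_right _ hj1
          _ = 2 ^ (k' - N) := hBB)
      (by
        intro j' _ hj'
        rw [Finset.mem_Ico, not_and_or, not_le, not_lt] at hj'
        rw [ENNReal.ofReal_eq_zero, sub_nonpos]
        rcases hj' with h | h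
        · have hc : (j':ℝ) + 1 ≤ (j:ℝ) * B := by exact_mod_cast h
          have : (j':ℝ) * s' + ℓ' ≤ (j:ℝ) * s := by nlinarith
          exact le_trans inf_le_right (this.trans le_sup_left)
        · have hc : (j:ℝ) * B + T ≤ (j':ℝ) := by exact_mod_cast h
          have : (j:ℝ) * s + ℓ ≤ (j':ℝ) * s' := by nlinarith
          exact le_trans inf_le_left (this.trans le_sup_right))]
    rw [Finset.sum_congr rfl (g := fun _ => ENNReal.ofReal ℓ')
      (by
        intro j' hj'
        rw [Finset.mem_Ico] at hj'
        have hlo : (j:ℝ) * B ≤ (j':ℝ) := by exact_mod_cast hj'.1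
        have hhi : (j':ℝ) + 1 ≤ (j:ℝ) * B + T := by exact_mod_cast hj'.2
        have hmax : (j:ℝ) * s ⊔ (j':ℝ) * s' = (j':ℝ) * s' := by
          rw [sup_eq_right]; nlinarith
        have hmin : ((j:ℝ) * s + ℓ) ⊓ ((j':ℝ) * s' + ℓ') = (j':ℝ) * s' + ℓ' := by
          rw [inf_eq_right]; nlinarith
        rw [hmax, hmin]
        congr 1
        ring)]
    rw [Finset.sum_const, Nat.card_Ico]
    congr 1
    omega
  rw [show Uset N M k ∩ Uset N M k' = ⋃ j ∈ Finset.range (2 ^ (k - N)),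
      (Set.Icc ((j:ℝ) * s) ((j:ℝ) * s + ℓ) ∩ Uset N M k') by
    rw [Uset, Set.iUnion₂_inter]]
  rw [measure_biUnion_finset
    (Set.PairwiseDisjoint.mono ((pairwiseDisjoint_grid hℓpos.le hℓs).set_pairwise _)
      (fun j => Set.inter_subset_left))
    (fun j _ => (measurableSet_Icc.inter (measurable_Uset N M k')))]
  rw [Finset.sum_congr rfl key, Finset.sum_const, Finset.card_range,
    smul_smul, nsmul_eq_mul]

lemma euclid_volume_pi (d : ℕ) (C : Set ℝ) (hC : MeasurableSet C) :
    (volume : Measure (EuclideanSpace ℝ (Fin d))) (WithLp.ofLp ⁻¹' Set.univ.pi fun _ => C)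
      = (volume C) ^ d := by
  have h := (EuclideanSpace.volume_preserving_symm_measurableEquiv_toLp (Fin d)).measure_preimage
    (s := Set.univ.pi fun _ : Fin d => C)
    (MeasurableSet.univ_pi fun _ => hC).nullMeasurableSet
  rw [volume_pi_pi, Finset.prod_const, Finset.card_univ, Fintype.card_fin] at h
  exact h

lemma real_two_calc (a : ℕ) (b : ℤ) (d : ℕ) :
    (((2 ^ a : ℕ) : ℝ) * (2 : ℝ) ^ b) ^ d = (2 : ℝ) ^ (((a : ℤ) + b) * (d : ℤ)) := by
  push_cast
  rw [← zpow_natCast (2:ℝ) a, ← zpow_add₀ (by norm_num : (2:ℝ) ≠ 0),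
    ← zpow_natCast ((2:ℝ) ^ ((a:ℤ) + b)) d, ← zpow_mul]

/-- With `h_k` the indicator of `cubeUnion d N M k` and `N ≤ k ≤ k' ≤ L = 2^{Nd}`,
the Lebesgue measure of the support of `h_k · h_{k'}` equals
`2^{-(N+M)d} · max{2^{(k-k')d}, 2^{-(N+M)d}}` if `k' ≤ k+N+M`, and
`2^{-(N+M)d} · 2^{-(N+M)d}` if `k' ≥ k+N+M`. -/
theorem cubeUnion_inter_volume (d N M : ℕ) (hd : 1 ≤ d) (hN : 1 ≤ N)
    (k k' : ℕ) (hNk : N ≤ k) (hkk' : k ≤ k') (hk'L : k' ≤ 2 ^ (N * d)) :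
    (k' ≤ k + N + M →
      volume (Function.support fun x =>
          (cubeUnion d N M k).indicator (fun _ => (1 : ℝ)) x *
            (cubeUnion d N M k').indicator (fun _ => (1 : ℝ)) x)
        = ENNReal.ofReal ((2 : ℝ) ^ (-((N : ℤ) + (M : ℤ)) * (d : ℤ)) *
            max ((2 : ℝ) ^ (((k : ℤ) - (k' : ℤ)) * (d : ℤ)))
              ((2 : ℝ) ^ (-((N : ℤ) + (M : ℤ)) * (d : ℤ)))))
    ∧ (k + N + M ≤ k' →
      volume (Function.support fun x =>
          (cubeUnion d N M k).indicator (fun _ => (1 : ℝ)) x *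
            (cubeUnion d N M k').indicator (fun _ => (1 : ℝ)) x)
        = ENNReal.ofReal ((2 : ℝ) ^ (-((N : ℤ) + (M : ℤ)) * (d : ℤ)) *
            (2 : ℝ) ^ (-((N : ℤ) + (M : ℤ)) * (d : ℤ)))) := by
  have hsupp : (Function.support fun x =>
      (cubeUnion d N M k).indicator (fun _ => (1 : ℝ)) x *
        (cubeUnion d N M k').indicator (fun _ => (1 : ℝ)) x)
      = cubeUnion d N M k ∩ cubeUnion d N M k' := by
    rw [Function.support_mul, Set.support_indicator, Set.support_indicator]
    simp [Function.support_const one_ne_zero]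
  have hℓ'ℓ : (2:ℝ) ^ (-(k':ℤ)-(M:ℤ)) ≤ 2 ^ (-(k:ℤ)-(M:ℤ)) :=
    zpow_le_zpow_right₀ one_le_two (by omega)
  have hbase : ∀ T : ℕ,
      (2:ℝ) ^ (-(k:ℤ)-(M:ℤ)) ≤ (T:ℝ) * 2 ^ ((N:ℤ)-(k':ℤ)) →
      (T:ℝ) * 2 ^ ((N:ℤ)-(k':ℤ)) + 2 ^ (-(k':ℤ)-(M:ℤ))
        ≤ 2 ^ (-(k:ℤ)-(M:ℤ)) + 2 ^ ((N:ℤ)-(k':ℤ)) →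
      T ≤ 2 ^ (k' - k) →
      volume (Function.support fun x =>
          (cubeUnion d N M k).indicator (fun _ => (1 : ℝ)) x *
            (cubeUnion d N M k').indicator (fun _ => (1 : ℝ)) x)
        = ENNReal.ofReal ((((2 ^ (k - N) * T : ℕ) : ℝ) * (2:ℝ) ^ (-(k':ℤ)-(M:ℤ))) ^ d) := by
    intro T h1 h2 h3
    rw [hsupp, cubeUnion_eq_pi, cubeUnion_eq_pi, ← Set.preimage_inter, ← Set.pi_inter_distrib,
      euclid_volume_pi d _ ((measurable_Uset N M k).inter (measurable_Uset N M k')),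
      volume_Uset_inter N M k k' T hN hNk hkk' h1 h2 h3,
      ← ENNReal.ofReal_natCast, ← ENNReal.ofReal_mul (by positivity),
      ← ENNReal.ofReal_pow (by positivity)]
  constructor
  · intro hc
    have h1 : (2:ℝ) ^ (-(k:ℤ)-(M:ℤ)) ≤ ((1:ℕ):ℝ) * 2 ^ ((N:ℤ)-(k':ℤ)) := by
      rw [Nat.cast_one, one_mul]
      exact zpow_le_zpow_right₀ one_le_two (by omega)
    have h2 : ((1:ℕ):ℝ) * 2 ^ ((N:ℤ)-(k':ℤ)) + 2 ^ (-(k':ℤ)-(M:ℤ))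
        ≤ 2 ^ (-(k:ℤ)-(M:ℤ)) + 2 ^ ((N:ℤ)-(k':ℤ)) := by
      rw [Nat.cast_one, one_mul]
      linarith
    rw [hbase 1 h1 h2 Nat.one_le_two_pow]
    congr 1
    rw [mul_one, real_two_calc (k - N) (-(k':ℤ)-(M:ℤ)) d,
      max_eq_left (zpow_le_zpow_right₀ one_le_two
        (mul_le_mul_of_nonneg_right (by omega) (by positivity))),
      ← zpow_add₀ (by norm_num : (2:ℝ) ≠ 0), ← add_mul]
    congr 1
    have e1 : ((k - N : ℕ):ℤ) = (k:ℤ) - N := by omega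
    rw [e1]
    ring
  · intro hc
    have hT : ((2 ^ (k' - k - N - M) : ℕ) : ℝ) * 2 ^ ((N:ℤ)-(k':ℤ)) = 2 ^ (-(k:ℤ)-(M:ℤ)) := by
      push_cast
      rw [← zpow_natCast (2:ℝ) (k' - k - N - M), ← zpow_add₀ (by norm_num : (2:ℝ) ≠ 0)]
      congr 1
      omega
    have h2 : ((2 ^ (k' - k - N - M) : ℕ):ℝ) * 2 ^ ((N:ℤ)-(k':ℤ)) + 2 ^ (-(k':ℤ)-(M:ℤ))
        ≤ 2 ^ (-(k:ℤ)-(M:ℤ)) + 2 ^ ((N:ℤ)-(k':ℤ)) := by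
      rw [hT]
      exact add_le_add_right (zpow_le_zpow_right₀ one_le_two (by omega)) _
    rw [hbase (2 ^ (k' - k - N - M)) (le_of_eq hT.symm) h2
        (Nat.pow_le_pow_right (by norm_num) (by omega))]
    congr 1
    rw [← pow_add, real_two_calc ((k - N) + (k' - k - N - M)) (-(k':ℤ)-(M:ℤ)) d,
      ← zpow_add₀ (by norm_num : (2:ℝ) ≠ 0), ← add_mul]
    congr 1
    have e1 : ((k - N + (k' - k - N - M) : ℕ):ℤ) = (k':ℤ) - 2*N - M := by omega
    rw [e1]
    ring
end

section
/- Let σ ≥ 0, r > 0, s > 0 with σ ≥ d/s, and let g : ℝ^d → ℂ be measurable, bounded, and constant on each dyadic cube of sidelength 1/r (taking only values 0 and 1). Then for every integer l ≥ 0 and every x, sup_{2^l/r ≤ |y| ≤ 2^{l+1}/r} |g(x+y)| ≤ C_s 2^{l d/s} (M(|g|^s)(x))^{1/s}, where M is the Hardy–Littlewood maximal operator and C_s depends only on s and d. -/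
open MeasureTheory

/-- The (uncentered-over-radii, centered) Hardy–Littlewood maximal function of a
nonnegative function `g` on `ℝ^d`. -/
noncomputable def hlMax (d : ℕ) (g : EuclideanSpace ℝ (Fin d) → ℝ)
    (x : EuclideanSpace ℝ (Fin d)) : ENNReal :=
  ⨆ (r : ℝ) (_ : 0 < r),
    (∫⁻ y in Metric.ball x r, ENNReal.ofReal (g y)) / volume (Metric.ball x r)

lemma euclid_coord_le_norm {d : ℕ} (w : EuclideanSpace ℝ (Fin d)) (i : Fin d) :
    |w i| ≤ ‖w‖ := by
  rw [EuclideanSpace.norm_eq]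
  have h1 : |w i| = Real.sqrt (‖w i‖ ^ 2) := by
    rw [Real.sqrt_sq_eq_abs]; simp [abs_abs]
  rw [h1]
  apply Real.sqrt_le_sqrt
  exact Finset.single_le_sum (f := fun j => ‖w j‖ ^ 2)
    (fun j _ => by positivity) (Finset.mem_univ i)

lemma euclid_norm_le {d : ℕ} (w : EuclideanSpace ℝ (Fin d)) {M : ℝ} (hM : 0 ≤ M)
    (h : ∀ i, |w i| ≤ M) : ‖w‖ ≤ Real.sqrt d * M := by
  rw [EuclideanSpace.norm_eq]
  have h1 : ∑ i, ‖w i‖ ^ 2 ≤ (d : ℝ) * M ^ 2 := by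
    calc ∑ i, ‖w i‖ ^ 2 ≤ ∑ _i : Fin d, M ^ 2 := by
          apply Finset.sum_le_sum
          intro j _
          have hj : ‖w j‖ ≤ M := by simpa using h j
          nlinarith [norm_nonneg (w j)]
      _ = (d : ℝ) * M ^ 2 := by simp [mul_comm]
  calc Real.sqrt (∑ i, ‖w i‖ ^ 2) ≤ Real.sqrt ((d : ℝ) * M ^ 2) := Real.sqrt_le_sqrt h1
    _ = Real.sqrt d * M := by
        rw [Real.sqrt_mul (Nat.cast_nonneg d), Real.sqrt_sq hM]

/-- If `g : ℝ^d → {0,1}` is constant on each half-open grid cube of sidelength `1/r`,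
then for every `l ≥ 0` and every `x`,
`sup_{2^l/r ≤ |y| ≤ 2^{l+1}/r} |g(x+y)| ≤ C_s 2^{ld/s} (M(|g|^s)(x))^{1/s}`,
with `C_s` depending only on `s` and `d`. -/
theorem grid_indicator_max_bound (d : ℕ) (hd : 1 ≤ d) (s σ : ℝ) (hs : 0 < s)
    (hσ : (d : ℝ) / s ≤ σ) :
    ∃ C : ℝ, 0 < C ∧ ∀ (r : ℝ), 0 < r → ∀ g : EuclideanSpace ℝ (Fin d) → ℝ,
      Measurable g → (∀ x, g x = 0 ∨ g x = 1) →
      (∀ x y : EuclideanSpace ℝ (Fin d), (∀ i, ⌊x i * r⌋ = ⌊y i * r⌋) → g x = g y) →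
      ∀ (l : ℕ) (x y : EuclideanSpace ℝ (Fin d)),
        (2 : ℝ) ^ l / r ≤ ‖y‖ → ‖y‖ ≤ (2 : ℝ) ^ (l + 1) / r →
        ENNReal.ofReal |g (x + y)|
          ≤ ENNReal.ofReal (C * (2 : ℝ) ^ ((l : ℝ) * (d : ℝ) / s)) *
              (hlMax d (fun z => |g z| ^ s) x) ^ (1 / s) := by
  have hsd : (0:ℝ) ≤ Real.sqrt d := Real.sqrt_nonneg d
  set A : ℝ := 3 + Real.sqrt d with hAdef
  have hA : 0 < A := by positivity
  refine ⟨(2 * A) ^ ((d : ℝ) / s), by positivity, ?_⟩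
  intro r hr g hgm hg01 hgc l x y hy1 hy2
  rcases hg01 (x + y) with h0 | h1
  · simp [h0]
  -- main case : g (x+y) = 1
  haveI : Nonempty (Fin d) := ⟨⟨0, hd⟩⟩
  set n : Fin d → ℤ := fun i => ⌊(x + y) i * r⌋ with hn
  set c : EuclideanSpace ℝ (Fin d) := WithLp.toLp 2 (fun i => ((n i : ℝ) + 1 / 2) / r) with hc
  set ρ : ℝ := (1 / 2) / r with hρdef
  set R : ℝ := 2 ^ l * A / r with hRdef
  have hρ0 : 0 < ρ := by positivity
  have hR0 : 0 < R := by positivity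
  have h2l : (1 : ℝ) ≤ 2 ^ l := one_le_pow₀ (by norm_num)
  have hρr : ρ * r = 1 / 2 := div_mul_cancel₀ _ hr.ne'
  -- every point of the ball `c ρ` lies in the same grid cube as `x+y`
  have hball_cube : ∀ z ∈ Metric.ball c ρ, g z = 1 := by
    intro z hz
    rw [← h1]
    apply hgc
    intro i
    have hzc : ‖z - c‖ < ρ := by
      rw [Metric.mem_ball, dist_eq_norm] at hz; exact hz
    have hco : |z i - c i| < ρ := by
      have hcl := euclid_coord_le_norm (z - c) i
      rw [PiLp.sub_apply] at hcl
      exact lt_of_le_of_lt hcl hzc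
    have hci : c i = ((n i : ℝ) + 1 / 2) / r := rfl
    have hcir : z i * r - ((n i : ℝ) + 1 / 2) = (z i - c i) * r := by
      rw [hci]; field_simp
    have hzi : |z i * r - ((n i : ℝ) + 1 / 2)| < 1 / 2 := by
      rw [hcir, abs_mul, abs_of_pos hr, ← hρr]
      exact mul_lt_mul_of_pos_right hco hr
    rw [abs_lt] at hzi
    show ⌊z i * r⌋ = n i
    rw [Int.floor_eq_iff]
    constructor <;> push_cast <;> linarith [hzi.1, hzi.2]
  -- inclusion `ball c ρ ⊆ ball x R`
  have hcxy : ‖c - (x + y)‖ ≤ Real.sqrt d * ρ := by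
    apply euclid_norm_le _ (le_of_lt hρ0)
    intro i
    rw [PiLp.sub_apply]
    have hfl1 : ((n i : ℝ)) ≤ (x + y) i * r := Int.floor_le _
    have hfl2 : (x + y) i * r < (n i : ℝ) + 1 := Int.lt_floor_add_one _
    have hci : c i = ((n i : ℝ) + 1 / 2) / r := rfl
    have he : c i - (x + y) i = (((n i : ℝ) + 1 / 2) - (x + y) i * r) / r := by
      rw [hci]; field_simp
    rw [he, hρdef, abs_div, abs_of_pos hr]
    gcongr
    rw [abs_le]
    constructor <;> linarith
  have hsub : Metric.ball c ρ ⊆ Metric.ball x R := by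
    intro z hz
    rw [Metric.mem_ball, dist_eq_norm] at hz ⊢
    have hzx : z - x = (z - c) + (c - (x + y)) + y := by abel
    have htri : ‖z - x‖ ≤ ‖z - c‖ + ‖c - (x + y)‖ + ‖y‖ := by
      rw [hzx]
      exact (norm_add_le _ _).trans (by gcongr; exact norm_add_le _ _)
    have hnum : (1 / 2 : ℝ) + Real.sqrt d * (1 / 2) + 2 ^ (l + 1)
        ≤ 2 ^ l * (3 + Real.sqrt d) := by
      rw [pow_succ]
      nlinarith [h2l, hsd, mul_nonneg (by linarith : (0:ℝ) ≤ (2:ℝ) ^ l - 1) hsd]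
    have hfinal : ρ + Real.sqrt d * ρ + 2 ^ (l + 1) / r ≤ R := by
      have he1 : ρ + Real.sqrt d * ρ + 2 ^ (l + 1) / r
          = (1 / 2 + Real.sqrt d * (1 / 2) + 2 ^ (l + 1)) / r := by
        rw [hρdef]; ring
      rw [he1, hRdef, hAdef]
      exact (div_le_div_iff_of_pos_right hr).mpr hnum
    linarith [hcxy, hy2]
  -- lower bound on the maximal function
  have hkey : volume (Metric.ball c ρ)
      ≤ ∫⁻ z in Metric.ball x R, ENNReal.ofReal (|g z| ^ s) := by
    calc volume (Metric.ball c ρ) = ∫⁻ _ in Metric.ball c ρ, 1 := (setLIntegral_one _).symm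
      _ = ∫⁻ z in Metric.ball c ρ, ENNReal.ofReal (|g z| ^ s) := by
          refine (setLIntegral_congr_fun measurableSet_ball ?_).symm
          intro z hz
          show ENNReal.ofReal (|g z| ^ s) = 1
          rw [hball_cube z hz]
          norm_num
      _ ≤ ∫⁻ z in Metric.ball x R, ENNReal.ofReal (|g z| ^ s) :=
          lintegral_mono_set hsub
  have hM : volume (Metric.ball c ρ) / volume (Metric.ball x R)
      ≤ hlMax d (fun z => |g z| ^ s) x := by
    refine le_trans ?_ (le_iSup_of_le R (le_iSup_of_le hR0 le_rfl))
    exact ENNReal.div_le_div_right hkey _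
  -- compute the volume ratio
  have hfr : Module.finrank ℝ (EuclideanSpace ℝ (Fin d)) = d := finrank_euclideanSpace_fin
  have hvol0 : volume (Metric.ball (0 : EuclideanSpace ℝ (Fin d)) 1) ≠ 0 :=
    (Metric.measure_ball_pos _ _ one_pos).ne'
  have hvol0' : volume (Metric.ball (0 : EuclideanSpace ℝ (Fin d)) 1) ≠ ⊤ :=
    measure_ball_lt_top.ne
  have hratio : volume (Metric.ball c ρ) / volume (Metric.ball x R)
      = ENNReal.ofReal ((ρ / R) ^ d) := by
    rw [Measure.addHaar_ball volume c hρ0.le, Measure.addHaar_ball volume x hR0.le, hfr,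
      ENNReal.mul_div_mul_right _ _ hvol0 hvol0',
      ← ENNReal.ofReal_div_of_pos (by positivity), ← div_pow]
  have hq : ρ / R = ((2 : ℝ) ^ l * (2 * A))⁻¹ := by
    rw [hρdef, hRdef]
    field_simp
  -- put everything together
  have hMlow : ENNReal.ofReal ((((2 : ℝ) ^ l * (2 * A))⁻¹) ^ d)
      ≤ hlMax d (fun z => |g z| ^ s) x := by
    rw [← hq, ← hratio]; exact hM
  have hMs : ENNReal.ofReal (((((2 : ℝ) ^ l * (2 * A))⁻¹) ^ d) ^ (1 / s))
      ≤ (hlMax d (fun z => |g z| ^ s) x) ^ (1 / s) := by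
    rw [← ENNReal.ofReal_rpow_of_pos (by positivity)]
    exact ENNReal.rpow_le_rpow hMlow (by positivity)
  have hp : ((l : ℝ) * (d : ℝ) / s) = (l : ℝ) * ((d : ℝ) / s) := by ring
  have hdp : ((d : ℝ) * (1 / s)) = (d : ℝ) / s := by ring
  set p : ℝ := (d : ℝ) / s with hpdef
  set u : ℝ := (2 : ℝ) ^ l with hu
  have hu0 : (0:ℝ) < u := by positivity
  have h2A : (0:ℝ) < 2 * A := by positivity
  have ea : (2 : ℝ) ^ ((l : ℝ) * (d : ℝ) / s) = u ^ p := by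
    rw [hp, Real.rpow_mul (by norm_num : (0:ℝ) ≤ 2), Real.rpow_natCast]
  have eb : ((((2 : ℝ) ^ l * (2 * A))⁻¹) ^ d) ^ (1 / s) = ((u * (2 * A)) ^ p)⁻¹ := by
    rw [← hu, inv_pow, ← Real.rpow_natCast (u * (2 * A)) d,
      Real.inv_rpow (by positivity), ← Real.rpow_mul (by positivity), hdp]
  have ec : (u * (2 * A)) ^ p = u ^ p * (2 * A) ^ p :=
    Real.mul_rpow hu0.le h2A.le
  have hup : (0:ℝ) < u ^ p := Real.rpow_pos_of_pos hu0 p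
  have h2Ap : (0:ℝ) < (2 * A) ^ p := Real.rpow_pos_of_pos h2A p
  have hreal : (2 * A) ^ ((d : ℝ) / s) * (2 : ℝ) ^ ((l : ℝ) * (d : ℝ) / s) *
      (((((2 : ℝ) ^ l * (2 * A))⁻¹) ^ d) ^ (1 / s)) = 1 := by
    rw [ea, eb, ec, ← hpdef]
    field_simp
  rw [h1, abs_one, ENNReal.ofReal_one]
  calc (1 : ENNReal)
      = ENNReal.ofReal ((2 * A) ^ ((d : ℝ) / s) * (2 : ℝ) ^ ((l : ℝ) * (d : ℝ) / s) *
          (((((2 : ℝ) ^ l * (2 * A))⁻¹) ^ d) ^ (1 / s))) := by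
        rw [hreal, ENNReal.ofReal_one]
    _ = ENNReal.ofReal ((2 * A) ^ ((d : ℝ) / s) * (2 : ℝ) ^ ((l : ℝ) * (d : ℝ) / s)) *
          ENNReal.ofReal (((((2 : ℝ) ^ l * (2 * A))⁻¹) ^ d) ^ (1 / s)) :=
        ENNReal.ofReal_mul (by positivity)
    _ ≤ ENNReal.ofReal ((2 * A) ^ ((d : ℝ) / s) * (2 : ℝ) ^ ((l : ℝ) * (d : ℝ) / s)) *
          (hlMax d (fun z => |g z| ^ s) x) ^ (1 / s) := mul_le_mul_right hMs _
end

section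
/- Let 0 < s ≤ 1 and let h : ℝ^d → {0,1} be a finite sum of indicator functions of disjoint dyadic cubes of sidelength 2^{-n}, and let η be a Schwartz function with η_n(x) = 2^{nd} η(2^n x). Then |η_n * h(x)| ≤ C_s (M(h^s)(x))^{1/s} for all x, where M is the Hardy–Littlewood maximal operator and C_s depends only on η, s, d. -/
open MeasureTheory

lemma coord_le_norm {d : ℕ} (v : EuclideanSpace ℝ (Fin d)) (i : Fin d) : |v i| ≤ ‖v‖ := by
  rw [EuclideanSpace.norm_eq, ← Real.sqrt_sq_eq_abs]
  apply Real.sqrt_le_sqrt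
  calc v i ^ 2 = ‖v i‖ ^ 2 := by rw [Real.norm_eq_abs, sq_abs]
    _ ≤ ∑ j, ‖v j‖ ^ 2 :=
      Finset.single_le_sum (f := fun j => ‖v j‖ ^ 2) (fun j _ => sq_nonneg _)
        (Finset.mem_univ i)

lemma norm_le_of_coords {d : ℕ} {v : EuclideanSpace ℝ (Fin d)} {b : ℝ} (hb : 0 ≤ b)
    (h : ∀ i, |v i| ≤ b) : ‖v‖ ≤ Real.sqrt d * b := by
  rw [EuclideanSpace.norm_eq]
  have h1 : ∑ j, ‖v j‖ ^ 2 ≤ (d : ℝ) * b ^ 2 := by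
    calc ∑ j, ‖v j‖ ^ 2 ≤ ∑ _j : Fin d, b ^ 2 := by
          apply Finset.sum_le_sum
          intro j _
          rw [Real.norm_eq_abs]
          exact pow_le_pow_left₀ (abs_nonneg _) (h j) 2
      _ = (d : ℝ) * b ^ 2 := by simp [Finset.sum_const, Finset.card_univ]
  calc Real.sqrt (∑ j, ‖v j‖ ^ 2) ≤ Real.sqrt ((d : ℝ) * b ^ 2) := Real.sqrt_le_sqrt h1
    _ = Real.sqrt d * b := by
        rw [Real.sqrt_mul (Nat.cast_nonneg d), Real.sqrt_sq hb]

lemma sqrt_nat_le_self {d : ℕ} (hd : 1 ≤ d) : Real.sqrt d ≤ (d : ℝ) := by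
  have h1 : (1 : ℝ) ≤ (d : ℝ) := by exact_mod_cast hd
  calc Real.sqrt d ≤ Real.sqrt ((d : ℝ) ^ 2) := by
        apply Real.sqrt_le_sqrt
        nlinarith
    _ = (d : ℝ) := Real.sqrt_sq (by linarith)

set_option maxHeartbeats 3000000 in
/-- If `h : ℝ^d → {0,1}` is a union of indicators of (disjoint) dyadic cubes of
sidelength `2^{-n}` (i.e. constant on each such cube) and `η` is a Schwartz function with
`η_n(x) = 2^{nd} η(2^n x)`, then `|η_n * h(x)| ≤ C_s (M(h^s)(x))^{1/s}` for all `x`,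
with `C_s` depending only on `η, s, d`. -/
theorem schwartz_convolution_maximal_bound (d : ℕ) (hd : 1 ≤ d) (s : ℝ)
    (hs0 : 0 < s) (hs1 : s ≤ 1) (η : SchwartzMap (EuclideanSpace ℝ (Fin d)) ℝ) :
    ∃ C : ℝ, 0 < C ∧ ∀ (n : ℕ) (h : EuclideanSpace ℝ (Fin d) → ℝ),
      Measurable h → (∀ x, h x = 0 ∨ h x = 1) →
      (∀ x y : EuclideanSpace ℝ (Fin d),
        (∀ i, ⌊x i * 2 ^ n⌋ = ⌊y i * 2 ^ n⌋) → h x = h y) →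
      ∀ x : EuclideanSpace ℝ (Fin d),
        ENNReal.ofReal |∫ y, (2 : ℝ) ^ (n * d) * η ((2 : ℝ) ^ n • (x - y)) * h y|
          ≤ ENNReal.ofReal C * (hlMax d (fun z => h z ^ s) x) ^ (1 / s) := by
  classical
  -- the exponent used for the decay of η
  set K : ℕ := ⌈(d : ℝ) / s⌉₊ with hK
  have hKge : (d : ℝ) * (1 / s) ≤ (K : ℝ) := by
    rw [mul_one_div]; exact Nat.le_ceil _
  -- Schwartz decay bound
  obtain ⟨B, hB0, hBη⟩ : ∃ B : ℝ, 0 ≤ B ∧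
      ∀ z : EuclideanSpace ℝ (Fin d), |η z| ≤ B / (1 + ‖z‖) ^ (d + 1 + K) := by
    refine ⟨2 ^ (d + 1 + K) *
      ((Finset.Iic ((d + 1 + K), 0)).sup
        (fun m => SchwartzMap.seminorm ℝ m.1 m.2) η), by positivity, fun z => ?_⟩
    have h1 := SchwartzMap.one_add_le_sup_seminorm_apply (𝕜 := ℝ)
      (m := ((d + 1 + K), 0)) le_rfl le_rfl η z
    rw [norm_iteratedFDeriv_zero] at h1
    rw [le_div_iff₀ (by positivity)]
    calc |η z| * (1 + ‖z‖) ^ (d + 1 + K) = (1 + ‖z‖) ^ (d + 1 + K) * ‖η z‖ := by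
          rw [Real.norm_eq_abs]; ring
      _ ≤ _ := h1
  -- the integrable majorant
  have hfinrank : Module.finrank ℝ (EuclideanSpace ℝ (Fin d)) = d := finrank_euclideanSpace_fin
  haveI : Nontrivial (EuclideanSpace ℝ (Fin d)) :=
    Module.nontrivial_of_finrank_pos (R := ℝ) (by rw [hfinrank]; exact hd)
  have hIint : Integrable (fun u : EuclideanSpace ℝ (Fin d) =>
      (((1 + ‖u‖) ^ (d + 1) : ℝ))⁻¹) := by
    have h2 := integrable_one_add_norm (E := EuclideanSpace ℝ (Fin d)) (μ := volume)
      (r := (d + 1 : ℝ)) (by rw [hfinrank]; norm_num)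
    refine h2.congr (Filter.Eventually.of_forall fun u => ?_)
    show (1 + ‖u‖) ^ (-((d : ℝ) + 1)) = ((1 + ‖u‖) ^ (d + 1))⁻¹
    rw [Real.rpow_neg (by positivity), ← Real.rpow_natCast (1 + ‖u‖) (d + 1)]
    congr 2
    push_cast
    ring
  set I : ℝ := ∫ u : EuclideanSpace ℝ (Fin d), (((1 + ‖u‖) ^ (d + 1) : ℝ))⁻¹ with hI
  have hI0 : 0 ≤ I := integral_nonneg fun u => by positivity
  -- the geometric constant
  set c₀ : ℝ := (2 * (3 + d) : ℝ)⁻¹ with hc₀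
  have hc₀0 : 0 < c₀ := by positivity
  refine ⟨(B * I + 1) / c₀ ^ ((d : ℝ) * (1 / s)), by positivity, ?_⟩
  intro n h hmeas hvals hcube x
  by_cases hne : ∃ y, h y = 1
  swap
  · have h0 : ∀ y, h y = 0 := fun y => (hvals y).resolve_right fun h1 => hne ⟨y, h1⟩
    simp only [h0, mul_zero, integral_zero, abs_zero, ENNReal.ofReal_zero]
    exact zero_le
  obtain ⟨y₀, hy₀⟩ := hne
  set S : Set (EuclideanSpace ℝ (Fin d)) := {y | h y = 1} with hSdef
  have hS : S.Nonempty := ⟨y₀, hy₀⟩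
  set ρ : ℝ := Metric.infDist x S with hρ
  have hρ0 : 0 ≤ ρ := Metric.infDist_nonneg
  set p : ℝ := (2 : ℝ) ^ n with hp
  have hp0 : 0 < p := by positivity
  set t : ℝ := max (p * ρ) 1 with ht
  have ht1 : 1 ≤ t := le_max_right _ _
  have ht0 : 0 < t := lt_of_lt_of_le one_pos ht1
  set r : ℝ := p⁻¹ * t with hr
  have hr0 : 0 < r := by positivity
  have hrρ : ρ ≤ r := by
    rw [hr]
    calc ρ = p⁻¹ * (p * ρ) := by field_simp
      _ ≤ p⁻¹ * t := by
          apply mul_le_mul_of_nonneg_left (le_max_left _ _) (by positivity)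
  have hrp : p⁻¹ ≤ r := by
    rw [hr]
    nlinarith [inv_pos.2 hp0]
  have htle : t ≤ 1 + p * ρ := by
    rw [ht]
    apply max_le (by nlinarith) (by nlinarith)
  -- h vanishes on the ball of radius ρ around x
  have hvanish : ∀ y, dist x y < ρ → h y = 0 := by
    intro y hy
    refine (hvals y).resolve_right fun h1 => ?_
    have : ρ ≤ dist x y := Metric.infDist_le_dist_of_mem (by exact h1)
    linarith
  -- a point of S at distance < 2r
  obtain ⟨y₁, hy₁S, hy₁d⟩ : ∃ y ∈ S, dist x y < ρ + r := by
    rw [← Metric.infDist_lt_iff hS]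
    linarith
  have hy₁ : h y₁ = 1 := hy₁S
  ---------------------------------------------------------------------------
  -- Step 1: the convolution bound |∫ g| ≤ B * I / t ^ K
  ---------------------------------------------------------------------------
  have key1 : |∫ y, (2 : ℝ) ^ (n * d) * η ((2 : ℝ) ^ n • (x - y)) * h y|
      ≤ B * I / t ^ K := by
    set g : EuclideanSpace ℝ (Fin d) → ℝ :=
      fun y => (2 : ℝ) ^ (n * d) * η ((2 : ℝ) ^ n • (x - y)) * h y with hg
    set F : EuclideanSpace ℝ (Fin d) → ℝ :=
      fun y => (2 : ℝ) ^ (n * d) * (B / (1 + p * ρ) ^ K) *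
        (((1 + ‖(2 : ℝ) ^ n • (x - y)‖) ^ (d + 1) : ℝ))⁻¹ with hF
    have hFint : Integrable F := by
      apply Integrable.const_mul
      have h3 : Integrable (fun u : EuclideanSpace ℝ (Fin d) =>
          (((1 + ‖(2 : ℝ) ^ n • u‖) ^ (d + 1) : ℝ))⁻¹) := by
        exact (integrable_comp_smul_iff volume
          (fun u : EuclideanSpace ℝ (Fin d) => (((1 + ‖u‖) ^ (d + 1) : ℝ))⁻¹)
          (ne_of_gt hp0)).2 hIint
      exact h3.comp_sub_left x
    have hpt : ∀ y, |g y| ≤ F y := by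
      intro y
      rcases hvals y with h0 | h1
      · rw [hg]
        simp only [h0, mul_zero, abs_zero]
        rw [hF]
        positivity
      · have hdist : ρ ≤ dist x y := by
          by_contra hc
          rw [hvanish y (by linarith)] at h1
          norm_num at h1
        set w : EuclideanSpace ℝ (Fin d) := (2 : ℝ) ^ n • (x - y) with hw
        have hnw : ‖w‖ = p * ‖x - y‖ := by
          rw [hw, norm_smul, Real.norm_eq_abs, abs_of_pos hp0]
        have hwρ : p * ρ ≤ ‖w‖ := by
          rw [hnw]
          apply mul_le_mul_of_nonneg_left _ hp0.le
          rw [← dist_eq_norm]; exact hdist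
        have hgy : |g y| = (2 : ℝ) ^ (n * d) * |η w| := by
          rw [hg]
          simp only [h1, mul_one, abs_mul, abs_of_pos (show (0:ℝ) < (2:ℝ)^(n*d) by positivity)]
          rw [hw]
        rw [hgy]
        simp only [hF]
        rw [mul_assoc, ← hw]
        apply mul_le_mul_of_nonneg_left _ (show (0:ℝ) ≤ (2:ℝ)^(n*d) by positivity)
        calc |η w| ≤ B / (1 + ‖w‖) ^ (d + 1 + K) := hBη w
          _ = B / ((1 + ‖w‖) ^ K * (1 + ‖w‖) ^ (d + 1)) := by
              rw [← pow_add]; ring_nf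
          _ ≤ B / ((1 + p * ρ) ^ K * (1 + ‖w‖) ^ (d + 1)) := by
              apply div_le_div_of_nonneg_left hB0 (by positivity)
              apply mul_le_mul_of_nonneg_right _ (by positivity)
              apply pow_le_pow_left₀ (by positivity)
              linarith
          _ = B / (1 + p * ρ) ^ K * ((1 + ‖w‖) ^ (d + 1))⁻¹ := by
              rw [div_mul_eq_div_div]
              rw [div_eq_mul_inv]
        -- matching `w` inside `F`
    have hintF : ∫ y, F y = (2 : ℝ) ^ (n * d) * (B / (1 + p * ρ) ^ K) *
        (((2 : ℝ) ^ (n * d))⁻¹ * I) := by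
      rw [hF, integral_const_mul]
      congr 1
      have h4 : ∫ y, (((1 + ‖(2 : ℝ) ^ n • (x - y)‖) ^ (d + 1) : ℝ))⁻¹
          = ∫ u, (((1 + ‖(2 : ℝ) ^ n • u‖) ^ (d + 1) : ℝ))⁻¹ :=
        integral_sub_left_eq_self
          (fun u => (((1 + ‖(2 : ℝ) ^ n • u‖) ^ (d + 1) : ℝ))⁻¹) volume x
      have h5 := Measure.integral_comp_smul (volume : Measure (EuclideanSpace ℝ (Fin d)))
        (fun u : EuclideanSpace ℝ (Fin d) => (((1 + ‖u‖) ^ (d + 1) : ℝ))⁻¹) ((2:ℝ)^n)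
      rw [h4, h5, hfinrank, smul_eq_mul, ← hI]
      congr 1
      rw [abs_of_pos (by positivity), ← pow_mul]
    calc |∫ y, g y| ≤ ∫ y, |g y| := by
          rw [← Real.norm_eq_abs]
          refine le_trans (norm_integral_le_integral_norm g) ?_
          simp [Real.norm_eq_abs]
      _ ≤ ∫ y, F y := by
          apply integral_mono_of_nonneg (Filter.Eventually.of_forall fun y => abs_nonneg _)
            hFint (Filter.Eventually.of_forall hpt)
      _ = B / (1 + p * ρ) ^ K * I := by
          rw [hintF]
          field_simp
      _ ≤ B * I / t ^ K := by
          rw [div_mul_eq_mul_div, mul_div_assoc, mul_div_assoc]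
          apply mul_le_mul_of_nonneg_left _ hB0
          apply div_le_div_of_nonneg_left hI0 (by positivity)
          exact pow_le_pow_left₀ ht0.le htle K
  ---------------------------------------------------------------------------
  -- Step 2: the maximal function lower bound
  ---------------------------------------------------------------------------
  set R : ℝ := (3 + d) * r with hR
  have hR0 : 0 < R := by positivity
  -- center of the dyadic cube containing y₁
  set c : EuclideanSpace ℝ (Fin d) :=
    (WithLp.equiv 2 (Fin d → ℝ)).symm (fun i => ((⌊y₁ i * p⌋ : ℝ) + 1/2) * p⁻¹) with hc
  have hci : ∀ i, c i = ((⌊y₁ i * p⌋ : ℝ) + 1/2) * p⁻¹ := fun i => rfl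
  set ε : ℝ := p⁻¹ / 2 with hε
  have hε0 : 0 < ε := by positivity
  -- on the small ball, h = 1
  have hsmall : ∀ z ∈ Metric.ball c ε, h z = 1 := by
    intro z hz
    rw [← hy₁]
    apply hcube z y₁
    intro i
    have hzi : |z i - c i| < ε := by
      have h5 : |(z - c) i| ≤ ‖z - c‖ := coord_le_norm (z - c) i
      have h6 : (z - c) i = z i - c i := rfl
      rw [h6] at h5
      calc |z i - c i| ≤ ‖z - c‖ := h5
        _ < ε := by rw [← dist_eq_norm]; exact hz
    have h7 : |z i * p - ((⌊y₁ i * p⌋ : ℝ) + 1/2)| < 1/2 := by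
      have : z i * p - ((⌊y₁ i * p⌋ : ℝ) + 1/2) = (z i - c i) * p := by
        rw [hci i]; field_simp
      rw [this, abs_mul, abs_of_pos hp0]
      calc |z i - c i| * p < ε * p := by
            apply mul_lt_mul_of_pos_right hzi hp0
        _ = 1/2 := by rw [hε]; field_simp
    rw [Int.floor_eq_iff]
    have h8 := abs_lt.1 h7
    constructor
    · linarith [h8.1]
    · push_cast; linarith [h8.2]
  -- the small ball is inside the big ball
  have hsub : Metric.ball c ε ⊆ Metric.ball x R := by
    intro z hz
    have hdzc : dist z c < ε := hz
    have hdcy : dist c y₁ ≤ (d : ℝ) * p⁻¹ := by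
      have h9 : ∀ i, |(c - y₁) i| ≤ p⁻¹ / 2 := by
        intro i
        have h10 : (c - y₁) i = c i - y₁ i := rfl
        rw [h10, hci i]
        have h11 : (0 : ℝ) ≤ y₁ i * p - ⌊y₁ i * p⌋ := by
          linarith [Int.floor_le (y₁ i * p)]
        have h12 : y₁ i * p - ⌊y₁ i * p⌋ < 1 := by
          linarith [Int.lt_floor_add_one (y₁ i * p)]
        have h13 : c i - y₁ i = ((⌊y₁ i * p⌋ : ℝ) + 1/2 - y₁ i * p) * p⁻¹ := by
          rw [hci i]; field_simp
        rw [← hci i, h13, abs_mul, abs_of_pos (inv_pos.2 hp0)]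
        have h14 : |(⌊y₁ i * p⌋ : ℝ) + 1/2 - y₁ i * p| ≤ 1/2 := by
          rw [abs_le]; constructor <;> linarith
        calc |(⌊y₁ i * p⌋ : ℝ) + 1/2 - y₁ i * p| * p⁻¹ ≤ (1/2) * p⁻¹ := by
              apply mul_le_mul_of_nonneg_right h14 (by positivity)
          _ = p⁻¹ / 2 := by ring
      calc dist c y₁ = ‖c - y₁‖ := dist_eq_norm c y₁
        _ ≤ Real.sqrt d * (p⁻¹ / 2) := norm_le_of_coords (by positivity) h9
        _ ≤ (d : ℝ) * (p⁻¹ / 2) := by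
            apply mul_le_mul_of_nonneg_right (sqrt_nat_le_self hd) (by positivity)
        _ ≤ (d : ℝ) * p⁻¹ := by
            apply mul_le_mul_of_nonneg_left _ (Nat.cast_nonneg d)
            linarith [inv_pos.2 hp0]
    have hdyx : dist y₁ x < 2 * r := by
      rw [dist_comm]; linarith
    have : dist z x ≤ dist z c + dist c y₁ + dist y₁ x := dist_triangle4 z c y₁ x
    have hεr : ε ≤ r := by
      rw [hε]; linarith [hrp]
    have hdp : (d : ℝ) * p⁻¹ ≤ (d : ℝ) * r :=
      mul_le_mul_of_nonneg_left hrp (Nat.cast_nonneg d)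
    calc dist z x ≤ dist z c + dist c y₁ + dist y₁ x := dist_triangle4 z c y₁ x
      _ < ε + (d : ℝ) * p⁻¹ + 2 * r := by
          apply add_lt_add_of_le_of_lt (add_le_add hdzc.le hdcy) hdyx
      _ ≤ r + (d : ℝ) * r + 2 * r := by linarith
      _ = R := by rw [hR]; ring
  -- the volume ratio
  have hV0 : volume (Metric.ball (0 : EuclideanSpace ℝ (Fin d)) 1) ≠ 0 :=
    (Metric.measure_ball_pos volume 0 one_pos).ne'
  have hVtop : volume (Metric.ball (0 : EuclideanSpace ℝ (Fin d)) 1) ≠ ⊤ :=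
    measure_ball_lt_top.ne
  have key2 : (ENNReal.ofReal c₀) ^ d / (ENNReal.ofReal t) ^ d
      ≤ hlMax d (fun z => h z ^ s) x := by
    have hlb : (∫⁻ y in Metric.ball x R, ENNReal.ofReal ((fun z => h z ^ s) y)) /
        volume (Metric.ball x R) ≤ hlMax d (fun z => h z ^ s) x := by
      rw [hlMax]
      exact le_iSup₂ (f := fun r (_ : 0 < r) =>
        (∫⁻ y in Metric.ball x r, ENNReal.ofReal (h y ^ s)) / volume (Metric.ball x r))
        R hR0
    refine le_trans ?_ hlb
    have hnum : volume (Metric.ball c ε) ≤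
        ∫⁻ y in Metric.ball x R, ENNReal.ofReal (h y ^ s) := by
      calc volume (Metric.ball c ε) = ∫⁻ _ in Metric.ball c ε, 1 :=
            (setLIntegral_one _).symm
        _ = ∫⁻ y in Metric.ball c ε, ENNReal.ofReal (h y ^ s) := by
            apply setLIntegral_congr_fun measurableSet_ball
            intro z hz
            beta_reduce
            rw [hsmall z hz, Real.one_rpow, ENNReal.ofReal_one]
        _ ≤ ∫⁻ y in Metric.ball x R, ENNReal.ofReal (h y ^ s) :=
            lintegral_mono_set hsub
    refine le_trans ?_ (ENNReal.div_le_div_right hnum _)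
    rw [Measure.addHaar_ball volume c hε0.le, Measure.addHaar_ball volume x hR0.le,
      hfinrank, ENNReal.mul_div_mul_right _ _ hV0 hVtop,
      ← ENNReal.ofReal_pow hc₀0.le, ← ENNReal.ofReal_pow ht0.le,
      ← ENNReal.ofReal_div_of_pos (by positivity),
      ← ENNReal.ofReal_div_of_pos (by positivity)]
    apply ENNReal.ofReal_le_ofReal
    rw [← div_pow]
    apply le_of_eq
    congr 1
    rw [hε, hR, hr, hc₀]
    field_simp
    congr 1
    rw [← mul_pow]
    congr 1
    rw [div_mul_div_comm, one_mul, div_eq_div_iff (by positivity) (by positivity)]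
    ring
  ---------------------------------------------------------------------------
  -- Step 3: combine
  ---------------------------------------------------------------------------
  set a : ENNReal := ENNReal.ofReal t with ha
  have ha1 : 1 ≤ a := by
    rw [ha, ← ENNReal.ofReal_one]
    exact ENNReal.ofReal_le_ofReal ht1
  have hexp : (d : ℝ) * (1 / s) ≤ (K : ℝ) := hKge
  have hchain1 : ENNReal.ofReal |∫ y, (2 : ℝ) ^ (n * d) * η ((2 : ℝ) ^ n • (x - y)) * h y|
      ≤ ENNReal.ofReal (B * I + 1) / a ^ (K : ℝ) := by
    calc ENNReal.ofReal |∫ y, (2 : ℝ) ^ (n * d) * η ((2 : ℝ) ^ n • (x - y)) * h y|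
        ≤ ENNReal.ofReal (B * I / t ^ K) := ENNReal.ofReal_le_ofReal key1
      _ = ENNReal.ofReal (B * I) / ENNReal.ofReal (t ^ K) :=
          ENNReal.ofReal_div_of_pos (by positivity)
      _ ≤ ENNReal.ofReal (B * I + 1) / ENNReal.ofReal (t ^ K) :=
          ENNReal.div_le_div_right (ENNReal.ofReal_le_ofReal (by linarith)) _
      _ = ENNReal.ofReal (B * I + 1) / a ^ (K : ℝ) := by
          rw [ENNReal.ofReal_pow ht0.le, ← ha, ENNReal.rpow_natCast]
  have hchain2 : ENNReal.ofReal (B * I + 1) / a ^ (K : ℝ)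
      ≤ ENNReal.ofReal (B * I + 1) / a ^ ((d : ℝ) * (1 / s)) := by
    apply ENNReal.div_le_div_left
    exact ENNReal.rpow_le_rpow_of_exponent_le ha1 hexp
  have hCc₀ : ENNReal.ofReal ((B * I + 1) / c₀ ^ ((d : ℝ) * (1 / s))) *
      (ENNReal.ofReal c₀) ^ ((d : ℝ) * (1 / s)) = ENNReal.ofReal (B * I + 1) := by
    rw [ENNReal.ofReal_rpow_of_pos hc₀0, ← ENNReal.ofReal_mul (by positivity)]
    congr 1
    rw [div_mul_cancel₀]
    positivity
  have hchain3 : ENNReal.ofReal (B * I + 1) / a ^ ((d : ℝ) * (1 / s))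
      ≤ ENNReal.ofReal ((B * I + 1) / c₀ ^ ((d : ℝ) * (1 / s))) *
        (hlMax d (fun z => h z ^ s) x) ^ (1 / s) := by
    have hstep : ((ENNReal.ofReal c₀) ^ d / (ENNReal.ofReal t) ^ d) ^ (1 / s)
        ≤ (hlMax d (fun z => h z ^ s) x) ^ (1 / s) :=
      ENNReal.rpow_le_rpow key2 (by positivity)
    have heq : ((ENNReal.ofReal c₀) ^ d / (ENNReal.ofReal t) ^ d) ^ (1 / s)
        = (ENNReal.ofReal c₀) ^ ((d : ℝ) * (1 / s)) / a ^ ((d : ℝ) * (1 / s)) := by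
      rw [ENNReal.div_rpow_of_nonneg _ _ (by positivity),
        ← ENNReal.rpow_natCast (ENNReal.ofReal c₀) d,
        ← ENNReal.rpow_natCast (ENNReal.ofReal t) d,
        ← ENNReal.rpow_mul, ← ENNReal.rpow_mul, ha]
    calc ENNReal.ofReal (B * I + 1) / a ^ ((d : ℝ) * (1 / s))
        = ENNReal.ofReal ((B * I + 1) / c₀ ^ ((d : ℝ) * (1 / s))) *
          ((ENNReal.ofReal c₀) ^ ((d : ℝ) * (1 / s)) / a ^ ((d : ℝ) * (1 / s))) := by
          rw [← mul_div_assoc (a := ENNReal.ofReal ((B * I + 1) / c₀ ^ ((d : ℝ) * (1 / s)))), hCc₀]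
      _ = ENNReal.ofReal ((B * I + 1) / c₀ ^ ((d : ℝ) * (1 / s))) *
          ((ENNReal.ofReal c₀) ^ d / (ENNReal.ofReal t) ^ d) ^ (1 / s) := by
          rw [heq]
      _ ≤ _ := mul_le_mul_right hstep _
  exact le_trans hchain1 (le_trans hchain2 hchain3)
end
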